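/- Every interdependent-choice equilibrium of a finite two-player game is individually rational: each player's expected payoff under α is at least his maximin value min over opponent actions of the max over own actions. -/
import Mathlib


open Finset

/-- Every interdependent-choice equilibrium (w.r.t. the full action set) of a finite
two-player game is individually rational: each player's expected payoff is at least
his maximin value `max_{a_i'} min_{a_{-i}} u_i(a_i', a_{-i})`. -/
theorem stmt2 {A1 A2 : Type} [Fintype A1] [Fintype A2] [Nonempty A1] [Nonempty A2]
    (u1 u2 : A1 → A2 → ℝ) (α : A1 → A2 → ℝ)
    (hpos : ∀ a1 a2, 0 ≤ α a1 a2)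
    (hsum : ∑ a1, ∑ a2, α a1 a2 = 1)
    (hice : ∃ θ : A1 → A2 → ℝ, (∀ a1 a2, 0 ≤ θ a1 a2 ∧ θ a1 a2 ≤ 1) ∧
      (∀ a1 a1', 0 ≤ ∑ a2, α a1 a2 *
        (u1 a1 a2 - (1 - θ a1 a2) * u1 a1' a2
          - θ a1 a2 * univ.inf' univ_nonempty (fun b2 => u1 a1' b2))) ∧
      (∀ a2 a2', 0 ≤ ∑ a1, α a1 a2 *
        (u2 a1 a2 - θ a1 a2 * u2 a1 a2'
          - (1 - θ a1 a2) * univ.inf' univ_nonempty (fun b1 => u2 b1 a2')))) :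
    univ.sup' univ_nonempty (fun a1' => univ.inf' univ_nonempty (fun a2 => u1 a1' a2))
        ≤ ∑ a1, ∑ a2, α a1 a2 * u1 a1 a2 ∧
    univ.sup' univ_nonempty (fun a2' => univ.inf' univ_nonempty (fun a1 => u2 a1 a2'))
        ≤ ∑ a1, ∑ a2, α a1 a2 * u2 a1 a2 := by
  obtain ⟨θ, hθ, h1, h2⟩ := hice
  constructor
  · rw [sup'_le_iff]
    intro a1' _
    set w : ℝ := univ.inf' univ_nonempty (fun b2 => u1 a1' b2) with hw
    have hs : 0 ≤ ∑ a1, ∑ a2, α a1 a2 *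
        (u1 a1 a2 - (1 - θ a1 a2) * u1 a1' a2 - θ a1 a2 * w) :=
      Finset.sum_nonneg (fun a1 _ => h1 a1 a1')
    have hsplit : ∑ a1, ∑ a2, α a1 a2 *
        (u1 a1 a2 - (1 - θ a1 a2) * u1 a1' a2 - θ a1 a2 * w)
        = (∑ a1, ∑ a2, α a1 a2 * u1 a1 a2)
          - ∑ a1, ∑ a2, α a1 a2 * ((1 - θ a1 a2) * u1 a1' a2 + θ a1 a2 * w) := by
      rw [← Finset.sum_sub_distrib]
      refine Finset.sum_congr rfl fun a1 _ => ?_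
      rw [← Finset.sum_sub_distrib]
      exact Finset.sum_congr rfl fun a2 _ => by ring
    have hconst : ∑ a1, ∑ a2, α a1 a2 * w = w := by
      simp_rw [← Finset.sum_mul, hsum, one_mul]
    have hmid : ∑ a1, ∑ a2, α a1 a2 * w
        ≤ ∑ a1, ∑ a2, α a1 a2 * ((1 - θ a1 a2) * u1 a1' a2 + θ a1 a2 * w) := by
      refine Finset.sum_le_sum fun a1 _ => Finset.sum_le_sum fun a2 _ => ?_
      have hle : w ≤ u1 a1' a2 := Finset.inf'_le _ (mem_univ a2)
      have h0 := (hθ a1 a2).1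
      have h1' := (hθ a1 a2).2
      nlinarith [mul_nonneg (hpos a1 a2) (mul_nonneg (by linarith : (0:ℝ) ≤ 1 - θ a1 a2)
        (by linarith : (0:ℝ) ≤ u1 a1' a2 - w))]
    rw [hsplit] at hs
    linarith
  · rw [sup'_le_iff]
    intro a2' _
    set w : ℝ := univ.inf' univ_nonempty (fun b1 => u2 b1 a2') with hw
    have hs : 0 ≤ ∑ a2, ∑ a1, α a1 a2 *
        (u2 a1 a2 - θ a1 a2 * u2 a1 a2' - (1 - θ a1 a2) * w) :=
      Finset.sum_nonneg (fun a2 _ => h2 a2 a2')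
    rw [Finset.sum_comm] at hs
    have hsplit : ∑ a1, ∑ a2, α a1 a2 *
        (u2 a1 a2 - θ a1 a2 * u2 a1 a2' - (1 - θ a1 a2) * w)
        = (∑ a1, ∑ a2, α a1 a2 * u2 a1 a2)
          - ∑ a1, ∑ a2, α a1 a2 * (θ a1 a2 * u2 a1 a2' + (1 - θ a1 a2) * w) := by
      rw [← Finset.sum_sub_distrib]
      refine Finset.sum_congr rfl fun a1 _ => ?_
      rw [← Finset.sum_sub_distrib]
      exact Finset.sum_congr rfl fun a2 _ => by ring
    have hconst : ∑ a1, ∑ a2, α a1 a2 * w = w := by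
      simp_rw [← Finset.sum_mul, hsum, one_mul]
    have hmid : ∑ a1, ∑ a2, α a1 a2 * w
        ≤ ∑ a1, ∑ a2, α a1 a2 * (θ a1 a2 * u2 a1 a2' + (1 - θ a1 a2) * w) := by
      refine Finset.sum_le_sum fun a1 _ => Finset.sum_le_sum fun a2 _ => ?_
      have hle : w ≤ u2 a1 a2' := Finset.inf'_le _ (mem_univ a1)
      have h0 := (hθ a1 a2).1
      have h1' := (hθ a1 a2).2
      nlinarith [mul_nonneg (hpos a1 a2) (mul_nonneg h0
        (by linarith : (0:ℝ) ≤ u2 a1 a2' - w))]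
    rw [hsplit] at hs
    linarith
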